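/- (Optimality of the reverse radial Gauss map) Let μ be a Borel probability measure on Ω_{C°} vanishing on sets of Hausdorff dimension n−2, let ν be a Borel probability measure on Ω_C, and let K be a C-pseudo-cone whose reverse radial Gauss map α*_K (defined μ-a.e.) pushes μ forward to ν. Then for every measurable map T : Ω_{C°} → Ω_C (defined μ-a.e.) with T#μ = ν, ∫ log|⟨u, α*_K(u)⟩| dμ(u) ≤ ∫ log|⟨u, T(u)⟩| dμ(u). -/

import Mathlib

open Set Metric MeasureTheory
open scoped InnerProductSpace Pointwise ENNReal
open scoped Classical

noncomputable section

abbrev E (n : ℕ) := EuclideanSpace ℝ (Fin n)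

/-- The dual cone `C° = {x : ⟪x,y⟫ ≤ 0 ∀ y ∈ C}`. -/
def dualCone {n : ℕ} (C : Set (E n)) : Set (E n) := {x | ∀ y ∈ C, ⟪x, y⟫_ℝ ≤ 0}

/-- `Ω_C = S^{n-1} ∩ int C`. -/
def OmegaC {n : ℕ} (C : Set (E n)) : Set (E n) := sphere (0 : E n) 1 ∩ interior C

/-- `Ω_{C°} = S^{n-1} ∩ int C°`. -/
def OmegaCp {n : ℕ} (C : Set (E n)) : Set (E n) := sphere (0 : E n) 1 ∩ interior (dualCone C)

/-- `C` is a closed convex pointed cone with nonempty interior. -/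
structure IsPointedCone {n : ℕ} (C : Set (E n)) : Prop where
  closed : IsClosed C
  convex : Convex ℝ C
  cone : ∀ r : ℝ, 0 ≤ r → ∀ x ∈ C, r • x ∈ C
  pointed : C ∩ (-C) = {(0 : E n)}
  intNonempty : (interior C).Nonempty

/-- `K` is a `C`-pseudo-cone: nonempty, closed, convex, `0 ∉ K`, `K + C = K ⊆ C`. -/
def IsPseudoCone {n : ℕ} (C K : Set (E n)) : Prop :=
  K.Nonempty ∧ IsClosed K ∧ Convex ℝ K ∧ (0 : E n) ∉ K ∧ K + C = K ∧ K ⊆ C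

/-- The support function `h_K(u) = sup {⟪u,y⟫ : y ∈ K}`. -/
def suppFn {n : ℕ} (K : Set (E n)) (u : E n) : ℝ := sSup ((fun y => ⟪u, y⟫_ℝ) '' K)

/-- The radial function `ρ_K(v) = min {r > 0 : r v ∈ K}`. -/
def radialFn {n : ℕ} (K : Set (E n)) (v : E n) : ℝ := sInf {r : ℝ | 0 < r ∧ r • v ∈ K}

/-- `u` is an outer normal vector of `K` at `x`. -/
def IsNormalAt {n : ℕ} (K : Set (E n)) (u x : E n) : Prop :=
  x ∈ K ∧ ∀ y ∈ K, ⟪u, y⟫_ℝ ≤ ⟪u, x⟫_ℝ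

/-- The pseudo-subdifferential `∂•K`. -/
def pseudoSubdiff {n : ℕ} (C K : Set (E n)) : Set (E n × E n) :=
  {p | p.1 ∈ OmegaC C ∧ p.2 ∈ OmegaCp C ∧ IsNormalAt K p.2 (radialFn K p.1 • p.1)}

/-- Integral with values in `[-∞,∞]`: positive part minus negative part. -/
def eIntegral {n : ℕ} (μ : Measure (E n)) (f : E n → ℝ) : EReal :=
  ((∫⁻ x, ENNReal.ofReal (f x) ∂μ : ℝ≥0∞) : EReal) -
    ((∫⁻ x, ENNReal.ofReal (-f x) ∂μ : ℝ≥0∞) : EReal)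


-- strict negativity in interior of dual cone
lemma inner_neg_of_interior_dual {n : ℕ} {C : Set (E n)} {u y : E n}
    (hu : u ∈ interior (dualCone C)) (hy : y ∈ C) (hy0 : y ≠ 0) : ⟪u, y⟫_ℝ < 0 := by
  obtain ⟨ε, hε, hball⟩ := Metric.isOpen_iff.mp isOpen_interior u hu
  have hny : 0 < ‖y‖ := norm_pos_iff.mpr hy0
  set w : E n := u + (ε / (2 * ‖y‖)) • y with hw
  have hwmem : w ∈ dualCone C := by
    apply interior_subset (hball ?_)
    simp only [Metric.mem_ball, hw, dist_eq_norm]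
    rw [add_sub_cancel_left, norm_smul]
    rw [Real.norm_eq_abs, abs_of_nonneg (by positivity)]
    rw [div_mul_eq_mul_div, mul_comm, mul_div_assoc]
    calc ‖y‖ * (ε / (2 * ‖y‖)) = ε / 2 := by field_simp
    _ < ε := by linarith
  have h1 : ⟪w, y⟫_ℝ ≤ 0 := hwmem y hy
  rw [hw, inner_add_left, real_inner_smul_left, real_inner_self_eq_norm_sq] at h1
  have : 0 < ε / (2 * ‖y‖) * ‖y‖ ^ 2 := by positivity
  linarith

lemma mem_K_add {n : ℕ} {C K : Set (E n)} (hK : IsPseudoCone C K)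
    {x c : E n} (hx : x ∈ K) (hc : c ∈ C) : x + c ∈ K := by
  have := hK.2.2.2.2.1
  rw [← this]
  exact Set.add_mem_add hx hc

-- the ray through v ∈ int C hits K
lemma ray_hits {n : ℕ} {C K : Set (E n)} (hC : IsPointedCone C) (hK : IsPseudoCone C K)
    {v : E n} (hv : v ∈ interior C) : ∃ r : ℝ, 0 < r ∧ r • v ∈ K := by
  obtain ⟨x₀, hx₀⟩ := hK.1
  obtain ⟨ε, hε, hball⟩ := Metric.isOpen_iff.mp isOpen_interior v hv
  set r : ℝ := (‖x₀‖ + 1) / ε with hr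
  have hrpos : 0 < r := by positivity
  refine ⟨r, hrpos, ?_⟩
  have hmem : v - r⁻¹ • x₀ ∈ C := by
    apply interior_subset (hball ?_)
    simp only [Metric.mem_ball, dist_eq_norm, sub_sub_cancel_left]
    rw [norm_neg, norm_smul, Real.norm_eq_abs, abs_of_nonneg (by positivity)]
    rw [hr]
    rw [inv_div, div_mul_eq_mul_div]
    rw [div_lt_iff₀ (by positivity)]
    nlinarith [norm_nonneg x₀]
  have h2 : r • (v - r⁻¹ • x₀) ∈ C := hC.cone r hrpos.le _ hmem
  have h3 : r • (v - r⁻¹ • x₀) = r • v - x₀ := by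
    rw [smul_sub, smul_smul, mul_inv_cancel₀ hrpos.ne', one_smul]
  have := mem_K_add hK hx₀ (h3 ▸ h2)
  simpa using this

lemma dist_le_of_memK {n : ℕ} {C K : Set (E n)} (hK : IsPseudoCone C K)
    {y : E n} (hy : y ∈ K) : infDist (0 : E n) K ≤ ‖y‖ := by
  simpa [dist_eq_norm] using infDist_le_dist_of_mem (x := (0 : E n)) hy

lemma infDist_K_pos {n : ℕ} {C K : Set (E n)} (hK : IsPseudoCone C K) :
    0 < infDist (0 : E n) K :=
  (IsClosed.notMem_iff_infDist_pos hK.2.1 hK.1).mp hK.2.2.2.1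

-- main radial facts
lemma radial_facts {n : ℕ} {C K : Set (E n)} (hC : IsPointedCone C) (hK : IsPseudoCone C K)
    {v : E n} (hv : v ∈ interior C) (hv0 : v ≠ 0) :
    radialFn K v • v ∈ K ∧ 0 < radialFn K v ∧
      ∀ t, radialFn K v ≤ t → t • v ∈ K := by
  have hnv : 0 < ‖v‖ := norm_pos_iff.mpr hv0
  set d := infDist (0 : E n) K with hd
  have hdpos : 0 < d := infDist_K_pos hK
  set S := {r : ℝ | 0 < r ∧ r • v ∈ K} with hS
  have hlb : ∀ r ∈ S, d / ‖v‖ ≤ r := by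
    intro r hr
    have := dist_le_of_memK hK hr.2
    rw [norm_smul, Real.norm_eq_abs, abs_of_pos hr.1] at this
    rw [div_le_iff₀ hnv]
    linarith
  have hSeq : S = (fun r : ℝ => r • v) ⁻¹' K ∩ Ici (d / ‖v‖) := by
    ext r
    constructor
    · intro hr; exact ⟨hr.2, hlb r hr⟩
    · intro ⟨h1, h2⟩
      refine ⟨lt_of_lt_of_le (by positivity) h2, h1⟩
  have hSclosed : IsClosed S := by
    rw [hSeq]
    exact (IsClosed.preimage (by continuity) hK.2.1).inter isClosed_Ici
  have hSne : S.Nonempty := ray_hits hC hK hv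
  have hSbdd : BddBelow S := ⟨d / ‖v‖, hlb⟩
  have hmem : radialFn K v ∈ S := IsClosed.csInf_mem hSclosed hSne hSbdd
  refine ⟨hmem.2, hmem.1, ?_⟩
  intro t ht
  have h1 : (t - radialFn K v) • v ∈ C := hC.cone _ (by linarith) v (interior_subset hv)
  have := mem_K_add hK hmem.2 h1
  rwa [← add_smul, add_sub_cancel] at this

lemma radial_le_iff {n : ℕ} {C K : Set (E n)} (hC : IsPointedCone C) (hK : IsPseudoCone C K)
    {v : E n} (hv : v ∈ interior C) (hv0 : v ≠ 0) (t : ℝ) :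
    radialFn K v ≤ t ↔ (0 < t ∧ t • v ∈ K) := by
  obtain ⟨h1, h2, h3⟩ := radial_facts hC hK hv hv0
  constructor
  · intro ht; exact ⟨lt_of_lt_of_le h2 ht, h3 t ht⟩
  · intro ⟨ht, htv⟩
    exact csInf_le ⟨0, fun r hr => hr.1.le⟩ ⟨ht, htv⟩

lemma radial_ge_d {n : ℕ} {C K : Set (E n)} (hK : IsPseudoCone C K)
    {v : E n} (hv1 : ‖v‖ = 1) (hmem : radialFn K v • v ∈ K) (hpos : 0 < radialFn K v) :
    infDist (0 : E n) K ≤ radialFn K v := by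
  have := dist_le_of_memK hK hmem
  rwa [norm_smul, Real.norm_eq_abs, abs_of_pos hpos, hv1, mul_one] at this

-- measurable modification of the radial function
lemma rho'_measurable {n : ℕ} {C K : Set (E n)} (hC : IsPointedCone C) (hK : IsPseudoCone C K) :
    Measurable (fun v : E n => if v ∈ interior C ∧ v ≠ 0 then radialFn K v else 1) := by
  apply measurable_of_Iic
  intro t
  have : (fun v : E n => if v ∈ interior C ∧ v ≠ 0 then radialFn K v else 1) ⁻¹' Iic t =
      (({v : E n | v ∈ interior C ∧ v ≠ 0} ∩ {v : E n | 0 < t ∧ t • v ∈ K}) ∪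
        ({v : E n | v ∈ interior C ∧ v ≠ 0}ᶜ ∩ {v : E n | (1:ℝ) ≤ t})) := by
    ext v
    by_cases hv : v ∈ interior C ∧ v ≠ 0
    · simp [hv, radial_le_iff hC hK hv.1 hv.2 t]
    · simp [hv]
  rw [this]
  have hP : MeasurableSet {v : E n | v ∈ interior C ∧ v ≠ 0} := by
    have : {v : E n | v ∈ interior C ∧ v ≠ 0} = interior C ∩ {(0:E n)}ᶜ := by
      ext v; simp [and_comm]
    rw [this]
    exact isOpen_interior.measurableSet.inter (measurableSet_singleton 0).compl
  apply MeasurableSet.union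
  · apply hP.inter
    by_cases ht : 0 < t
    · have : {v : E n | 0 < t ∧ t • v ∈ K} = (fun v : E n => t • v) ⁻¹' K := by
        ext v; simp [ht]
      rw [this]
      exact (IsClosed.preimage (continuous_const_smul t) hK.2.1).measurableSet
    · have : {v : E n | 0 < t ∧ t • v ∈ K} = ∅ := by
        ext v; simp [ht]
      simp [this]
  · apply hP.compl.inter
    by_cases h1 : (1:ℝ) ≤ t
    · simp [h1]
    · simp [h1]

lemma pointwise_key {n : ℕ} {C K : Set (E n)} (hC : IsPointedCone C) (hK : IsPseudoCone C K)
    {y₀ : E n} (hy₀ : y₀ ∈ K) {u vα vT : E n}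
    (hu : u ∈ OmegaCp C) (hvα : vα ∈ OmegaC C)
    (hN : IsNormalAt K u (radialFn K vα • vα)) (hvT : vT ∈ OmegaC C) :
    0 < -(radialFn K vα * ⟪u, vα⟫_ℝ) ∧
    -(radialFn K vα * ⟪u, vα⟫_ℝ) ≤ ‖y₀‖ ∧
    Real.log |⟪u, vα⟫_ℝ| = Real.log (-(radialFn K vα * ⟪u, vα⟫_ℝ)) - Real.log (radialFn K vα) ∧
    Real.log (-(radialFn K vα * ⟪u, vα⟫_ℝ)) - Real.log (radialFn K vT) ≤ Real.log |⟪u, vT⟫_ℝ| ∧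
    infDist (0:E n) K ≤ radialFn K vα ∧ infDist (0:E n) K ≤ radialFn K vT ∧
    Real.log |⟪u, vα⟫_ℝ| ≤ 0 ∧ Real.log |⟪u, vT⟫_ℝ| ≤ 0 ∧
    vα ∈ interior C ∧ vα ≠ 0 ∧ vT ∈ interior C ∧ vT ≠ 0 := by
  have hnu : ‖u‖ = 1 := mem_sphere_zero_iff_norm.mp hu.1
  have hnvα : ‖vα‖ = 1 := mem_sphere_zero_iff_norm.mp hvα.1
  have hnvT : ‖vT‖ = 1 := mem_sphere_zero_iff_norm.mp hvT.1
  have hvα0 : vα ≠ 0 := by intro h; rw [h, norm_zero] at hnvα; norm_num at hnvα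
  have hvT0 : vT ≠ 0 := by intro h; rw [h, norm_zero] at hnvT; norm_num at hnvT
  set ρα := radialFn K vα with hρα
  have hx : ρα • vα ∈ K := hN.1
  have hρα0 : (0:ℝ) ≤ ρα := Real.sInf_nonneg (fun r hr => hr.1.le)
  have hραpos : 0 < ρα := by
    rcases hρα0.lt_or_eq with h | h
    · exact h
    · exfalso; rw [← h, zero_smul] at hx; exact hK.2.2.2.1 hx
  have hx0 : ρα • vα ≠ 0 := fun h => hK.2.2.2.1 (h ▸ hx)
  have hneg : ⟪u, ρα • vα⟫_ℝ < 0 :=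
    inner_neg_of_interior_dual hu.2 (hK.2.2.2.2.2 hx) hx0
  rw [real_inner_smul_right] at hneg
  set c := -(ρα * ⟪u, vα⟫_ℝ) with hcdef
  have hc : 0 < c := neg_pos.mpr hneg
  have hia : ⟪u, vα⟫_ℝ < 0 := by nlinarith
  have habsα : |⟪u, vα⟫_ℝ| = c / ρα := by
    rw [abs_of_neg hia]; field_simp [hcdef]; ring
  have hlogα : Real.log |⟪u, vα⟫_ℝ| = Real.log c - Real.log ρα := by
    rw [habsα, Real.log_div hc.ne' hραpos.ne']
  have hcM : c ≤ ‖y₀‖ := by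
    have h1 := hN.2 y₀ hy₀
    rw [real_inner_smul_right] at h1
    have h2 : -⟪u, y₀⟫_ℝ ≤ ‖y₀‖ := by
      have := abs_real_inner_le_norm u y₀
      rw [hnu, one_mul] at this
      have := neg_abs_le ⟪u, y₀⟫_ℝ
      linarith [abs_real_inner_le_norm u y₀]
    linarith
  obtain ⟨hmemT, hρTpos, -⟩ := radial_facts hC hK hvT.2 hvT0
  set ρT := radialFn K vT with hρT
  have h2 : ⟪u, ρT • vT⟫_ℝ ≤ ⟪u, ρα • vα⟫_ℝ := hN.2 _ hmemT
  rw [real_inner_smul_right, real_inner_smul_right] at h2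
  have hiT : ⟪u, vT⟫_ℝ < 0 := by nlinarith
  have habsT : c / ρT ≤ |⟪u, vT⟫_ℝ| := by
    rw [abs_of_neg hiT, div_le_iff₀ hρTpos]
    nlinarith
  have hlogT : Real.log c - Real.log ρT ≤ Real.log |⟪u, vT⟫_ℝ| := by
    have := Real.log_le_log (div_pos hc hρTpos) habsT
    rwa [Real.log_div hc.ne' hρTpos.ne'] at this
  have hαnp : Real.log |⟪u, vα⟫_ℝ| ≤ 0 := by
    apply Real.log_nonpos (abs_nonneg _)
    have := abs_real_inner_le_norm u vα
    rw [hnu, hnvα] at this; linarith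
  have hTnp : Real.log |⟪u, vT⟫_ℝ| ≤ 0 := by
    apply Real.log_nonpos (abs_nonneg _)
    have := abs_real_inner_le_norm u vT
    rw [hnu, hnvT] at this; linarith
  exact ⟨hc, hcM, hlogα, hlogT, radial_ge_d hK hnvα hx hραpos,
    radial_ge_d hK hnvT hmemT hρTpos, hαnp, hTnp, hvα.2, hvα0, hvT.2, hvT0⟩

/-- optimality of the reverse radial Gauss map: if `α = α*_K` pushes
`μ` forward to `ν`, where `μ` vanishes on sets of Hausdorff dimension `≤ n-2`, then
`∫ log|⟪u, α(u)⟫| dμ ≤ ∫ log|⟪u, T(u)⟫| dμ` for every measurable `T` with `T#μ = ν`. -/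
theorem stmt17 {n : ℕ} (C K : Set (E n)) (hC : IsPointedCone C) (hK : IsPseudoCone C K)
    (μ ν : Measure (E n)) [IsProbabilityMeasure μ] [IsProbabilityMeasure ν]
    (hμsupp : μ (OmegaCp C)ᶜ = 0) (hνsupp : ν (OmegaC C)ᶜ = 0)
    (hμdim : ∀ A : Set (E n), dimH A ≤ (n : ℝ≥0∞) - 2 → μ A = 0)
    (α : E n → E n) (hαmeas : Measurable α) (hαmap : Measure.map α μ = ν)
    (hα : ∀ᵐ u ∂μ, α u ∈ OmegaC C ∧ IsNormalAt K u (radialFn K (α u) • α u))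
    (T : E n → E n) (hTmeas : Measurable T) (hTmap : Measure.map T μ = ν)
    (hT : ∀ᵐ u ∂μ, T u ∈ OmegaC C) :
    eIntegral μ (fun u => Real.log |⟪u, α u⟫_ℝ|) ≤
      eIntegral μ (fun u => Real.log |⟪u, T u⟫_ℝ|) := by
  classical
  obtain ⟨y₀, hy₀⟩ := hK.1
  have hd : 0 < infDist (0 : E n) K := infDist_K_pos hK
  set d := infDist (0 : E n) K with hddef
  have hdM : d ≤ ‖y₀‖ := dist_le_of_memK hK hy₀
  set a := Real.log d with ha
  set m := Real.log ‖y₀‖ with hm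
  have ham : a ≤ m := Real.log_le_log hd hdM
  set κ := ENNReal.ofReal (m - a) with hκdef
  set ρ' : E n → ℝ := fun v => if v ∈ interior C ∧ v ≠ 0 then radialFn K v else 1 with hρ'def
  have hρ'meas : Measurable ρ' := rho'_measurable hC hK
  set F' : E n → ℝ≥0∞ := fun v => ENNReal.ofReal (Real.log (ρ' v) - a) with hF'def
  have hF' : Measurable F' :=
    ((Real.measurable_log.comp hρ'meas).sub measurable_const).ennreal_ofReal
  set Λ : E n → ℝ≥0∞ :=
    fun u => ENNReal.ofReal (m - Real.log (-(radialFn K (α u) * ⟪u, α u⟫_ℝ))) with hΛdef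
  have hmuae : ∀ᵐ u ∂μ, u ∈ OmegaCp C := by
    rw [MeasureTheory.ae_iff]
    exact hμsupp
  have hAE : ∀ᵐ u ∂μ,
      0 < -(radialFn K (α u) * ⟪u, α u⟫_ℝ) ∧
      -(radialFn K (α u) * ⟪u, α u⟫_ℝ) ≤ ‖y₀‖ ∧
      Real.log |⟪u, α u⟫_ℝ| =
        Real.log (-(radialFn K (α u) * ⟪u, α u⟫_ℝ)) - Real.log (radialFn K (α u)) ∧
      Real.log (-(radialFn K (α u) * ⟪u, α u⟫_ℝ)) - Real.log (radialFn K (T u)) ≤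
        Real.log |⟪u, T u⟫_ℝ| ∧
      infDist (0:E n) K ≤ radialFn K (α u) ∧ infDist (0:E n) K ≤ radialFn K (T u) ∧
      Real.log |⟪u, α u⟫_ℝ| ≤ 0 ∧ Real.log |⟪u, T u⟫_ℝ| ≤ 0 ∧
      α u ∈ interior C ∧ α u ≠ 0 ∧ T u ∈ interior C ∧ T u ≠ 0 := by
    filter_upwards [hmuae, hα, hT] with u hu hN hTu
    exact pointwise_key hC hK hy₀ hu hN.1 hN.2 hTu
  have step1 : ∫⁻ u, (ENNReal.ofReal (-(Real.log |⟪u, T u⟫_ℝ|)) + κ) ∂μ ≤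
      ∫⁻ u, (F' (T u) + Λ u) ∂μ := by
    apply lintegral_mono_ae
    filter_upwards [hAE] with u h
    obtain ⟨hc, hcM, hlogα, hlogT, hdα, hdT, hαnp, hTnp, hαint, hα0, hTint, hT0⟩ := h
    have hρ'T : ρ' (T u) = radialFn K (T u) := if_pos ⟨hTint, hT0⟩
    have hLm : Real.log (-(radialFn K (α u) * ⟪u, α u⟫_ℝ)) ≤ m := Real.log_le_log hc hcM
    have h1 : (0:ℝ) ≤ -(Real.log |⟪u, T u⟫_ℝ|) := by linarith
    have h2 : (0:ℝ) ≤ m - a := by linarith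
    have h3 : (0:ℝ) ≤ Real.log (ρ' (T u)) - a := by
      rw [hρ'T]
      have := Real.log_le_log hd hdT
      linarith
    have h4 : (0:ℝ) ≤ m - Real.log (-(radialFn K (α u) * ⟪u, α u⟫_ℝ)) := by linarith
    calc ENNReal.ofReal (-(Real.log |⟪u, T u⟫_ℝ|)) + κ
        = ENNReal.ofReal (-(Real.log |⟪u, T u⟫_ℝ|) + (m - a)) :=
          (ENNReal.ofReal_add h1 h2).symm
      _ ≤ ENNReal.ofReal ((Real.log (ρ' (T u)) - a) +
            (m - Real.log (-(radialFn K (α u) * ⟪u, α u⟫_ℝ)))) := by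
          apply ENNReal.ofReal_le_ofReal
          rw [hρ'T]
          linarith
      _ = F' (T u) + Λ u := ENNReal.ofReal_add h3 h4
  have step6 : ∀ᵐ u ∂μ, F' (α u) + Λ u =
      ENNReal.ofReal (-(Real.log |⟪u, α u⟫_ℝ|)) + κ := by
    filter_upwards [hAE] with u h
    obtain ⟨hc, hcM, hlogα, hlogT, hdα, hdT, hαnp, hTnp, hαint, hα0, hTint, hT0⟩ := h
    have hρ'α : ρ' (α u) = radialFn K (α u) := if_pos ⟨hαint, hα0⟩
    have hLm : Real.log (-(radialFn K (α u) * ⟪u, α u⟫_ℝ)) ≤ m := Real.log_le_log hc hcM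
    have h1 : (0:ℝ) ≤ -(Real.log |⟪u, α u⟫_ℝ|) := by linarith
    have h2 : (0:ℝ) ≤ m - a := by linarith
    have h3 : (0:ℝ) ≤ Real.log (ρ' (α u)) - a := by
      rw [hρ'α]
      have := Real.log_le_log hd hdα
      linarith
    have h4 : (0:ℝ) ≤ m - Real.log (-(radialFn K (α u) * ⟪u, α u⟫_ℝ)) := by linarith
    calc F' (α u) + Λ u
        = ENNReal.ofReal ((Real.log (ρ' (α u)) - a) +
            (m - Real.log (-(radialFn K (α u) * ⟪u, α u⟫_ℝ)))) :=
          (ENNReal.ofReal_add h3 h4).symm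
      _ = ENNReal.ofReal (-(Real.log |⟪u, α u⟫_ℝ|) + (m - a)) := by
          congr 1
          rw [hρ'α]
          linarith
      _ = ENNReal.ofReal (-(Real.log |⟪u, α u⟫_ℝ|)) + κ := ENNReal.ofReal_add h1 h2
  have hBB' : ∫⁻ u, ENNReal.ofReal (-(Real.log |⟪u, T u⟫_ℝ|)) ∂μ ≤
      ∫⁻ u, ENNReal.ofReal (-(Real.log |⟪u, α u⟫_ℝ|)) ∂μ := by
    have e2 : ∫⁻ u, (ENNReal.ofReal (-(Real.log |⟪u, T u⟫_ℝ|)) + κ) ∂μ =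
        (∫⁻ u, ENNReal.ofReal (-(Real.log |⟪u, T u⟫_ℝ|)) ∂μ) + κ := by
      rw [lintegral_add_right _ measurable_const, lintegral_const, measure_univ, mul_one]
    have e3 : ∫⁻ u, (F' (T u) + Λ u) ∂μ =
        (∫⁻ u, F' (T u) ∂μ) + ∫⁻ u, Λ u ∂μ := lintegral_add_left (hF'.comp hTmeas) _
    have e4 : ∫⁻ u, F' (T u) ∂μ = ∫⁻ u, F' (α u) ∂μ := by
      rw [← lintegral_map hF' hTmeas, hTmap, ← hαmap, lintegral_map hF' hαmeas]
    have e5 : (∫⁻ u, F' (α u) ∂μ) + ∫⁻ u, Λ u ∂μ =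
        ∫⁻ u, (F' (α u) + Λ u) ∂μ := (lintegral_add_left (hF'.comp hαmeas) _).symm
    have e6 : ∫⁻ u, (F' (α u) + Λ u) ∂μ =
        ∫⁻ u, (ENNReal.ofReal (-(Real.log |⟪u, α u⟫_ℝ|)) + κ) ∂μ := lintegral_congr_ae step6
    have e7 : ∫⁻ u, (ENNReal.ofReal (-(Real.log |⟪u, α u⟫_ℝ|)) + κ) ∂μ =
        (∫⁻ u, ENNReal.ofReal (-(Real.log |⟪u, α u⟫_ℝ|)) ∂μ) + κ := by
      rw [lintegral_add_right _ measurable_const, lintegral_const, measure_univ, mul_one]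
    have hchain : (∫⁻ u, ENNReal.ofReal (-(Real.log |⟪u, T u⟫_ℝ|)) ∂μ) + κ ≤
        (∫⁻ u, ENNReal.ofReal (-(Real.log |⟪u, α u⟫_ℝ|)) ∂μ) + κ := by
      rw [← e2, ← e7, ← e6, ← e5, ← e4, ← e3]
      exact step1
    exact (ENNReal.add_le_add_iff_right ENNReal.ofReal_ne_top).mp hchain
  have hposα : ∫⁻ u, ENNReal.ofReal (Real.log |⟪u, α u⟫_ℝ|) ∂μ = 0 := by
    have h0 : ∀ᵐ u ∂μ, ENNReal.ofReal (Real.log |⟪u, α u⟫_ℝ|) = (0:ℝ≥0∞) := by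
      filter_upwards [hAE] with u h
      exact ENNReal.ofReal_eq_zero.mpr h.2.2.2.2.2.2.1
    rw [lintegral_congr_ae h0, lintegral_zero]
  have hposT : ∫⁻ u, ENNReal.ofReal (Real.log |⟪u, T u⟫_ℝ|) ∂μ = 0 := by
    have h0 : ∀ᵐ u ∂μ, ENNReal.ofReal (Real.log |⟪u, T u⟫_ℝ|) = (0:ℝ≥0∞) := by
      filter_upwards [hAE] with u h
      exact ENNReal.ofReal_eq_zero.mpr h.2.2.2.2.2.2.2.1
    rw [lintegral_congr_ae h0, lintegral_zero]
  simp only [eIntegral]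
  rw [hposα, hposT]
  exact EReal.sub_le_sub le_rfl (EReal.coe_ennreal_le_coe_ennreal_iff.mpr hBB')
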